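/- Let N, n be integers with 2 ≤ n and 2n + 1 < N, let y ≥ 0, and let u = u(y) be the unique positive root of c₂(y)u² + c₁(y)u + c₀ = 0 as above. Define c(y) = ((n-1)/(N-2n))·tanh'(y) - (N-n-1)/((N-2n)·u(y)). Then c(y) ≤ -((N-n-1)(N-2n-1))/((N-2n)(N-1)) < 0. -/

import Mathlib

/-- `tanh'(y)`. -/
noncomputable def tanhD (y : ℝ) : ℝ := deriv Real.tanh y

/-- The coefficient `c₂(y)` of the quadratic for `u`. -/
noncomputable def c2 (N n y : ℝ) : ℝ := (n + 1 + (n - 1) / (N - 2 * n)) * tanhD y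

/-- The coefficient `c₁(y)` of the quadratic for `u`. -/
noncomputable def c1 (N n y : ℝ) : ℝ :=
  (N - 2 * n - 1) * (N - n - 1) / (N - 2 * n) + (N - 1) * (n - 1) * tanhD y / (N - 2 * n)

/-- The constant coefficient `c₀`. -/
noncomputable def c0 (N n : ℝ) : ℝ := -((N - n - 1) * (N - 1) / (N - 2 * n))

/-- The positive root `u(y)` of `c₂u² + c₁u + c₀ = 0`. -/
noncomputable def uRoot (N n y : ℝ) : ℝ :=
  (-(c1 N n y) + Real.sqrt ((c1 N n y) ^ 2 - 4 * c2 N n y * c0 N n)) / (2 * c2 N n y)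

/-- The quantity `c(y)` from the cubic reduction. -/
noncomputable def cFun (N n y : ℝ) : ℝ :=
  (n - 1) / (N - 2 * n) * tanhD y - (N - n - 1) / ((N - 2 * n) * uRoot N n y)

/-- The quantity `a(y)` from the cubic reduction. -/
noncomputable def aFun (N n y : ℝ) : ℝ :=
  (n - 1) / (N - 2 * n) * iteratedDeriv 3 Real.tanh y / 6

/-- The quantity `b(y)` from the cubic reduction. -/
noncomputable def bFun (N n y : ℝ) : ℝ :=
  (n - 1) / (N - 2 * n) * iteratedDeriv 2 Real.tanh y / 2

/-- The cubic coefficient `λ₃(y, N, n)` at the bifurcation. -/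
noncomputable def lam3 (N n y : ℝ) : ℝ :=
  -(N - 1) / 3 + n * (N - n - 1) / (n - 1) *
    (2 * aFun N n y * cFun N n y - 4 * (bFun N n y) ^ 2) / (cFun N n y) ^ 5


lemma hasDerivAt_tanh (x : ℝ) : HasDerivAt Real.tanh (1 / Real.cosh x ^ 2) x := by
  have h : HasDerivAt (fun y => Real.sinh y / Real.cosh y)
      ((Real.cosh x * Real.cosh x - Real.sinh x * Real.sinh x) / Real.cosh x ^ 2) x :=
    (Real.hasDerivAt_sinh x).div (Real.hasDerivAt_cosh x) (ne_of_gt (Real.cosh_pos x))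
  have e : (Real.cosh x * Real.cosh x - Real.sinh x * Real.sinh x) = 1 := by
    nlinarith [Real.cosh_sq_sub_sinh_sq x]
  rw [e] at h
  exact h.congr_of_eventuallyEq (Filter.Eventually.of_forall fun y => (Real.tanh_eq_sinh_div_cosh y))

lemma tanhD_pos (y : ℝ) : 0 < tanhD y := by
  rw [tanhD, (hasDerivAt_tanh y).deriv]
  positivity

/-- `c(y)` is bounded above by a negative constant. -/
theorem stmt_7 (N n : ℤ) (hn : 2 ≤ n) (hnN : 2 * n + 1 < N) (y : ℝ) (hy : 0 ≤ y) :
    cFun (N : ℝ) (n : ℝ) y ≤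
      -(((N : ℝ) - (n : ℝ) - 1) * ((N : ℝ) - 2 * (n : ℝ) - 1)) /
        (((N : ℝ) - 2 * (n : ℝ)) * ((N : ℝ) - 1)) ∧
    -(((N : ℝ) - (n : ℝ) - 1) * ((N : ℝ) - 2 * (n : ℝ) - 1)) /
        (((N : ℝ) - 2 * (n : ℝ)) * ((N : ℝ) - 1)) < 0 := by
  have hn' : (2 : ℝ) ≤ (n : ℝ) := by exact_mod_cast hn
  have hN' : 2 * (n : ℝ) + 2 ≤ (N : ℝ) := by
    have : 2 * n + 2 ≤ N := by omega
    exact_mod_cast this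
  set Nr := (N : ℝ)
  set nr := (n : ℝ)
  have hd : (2 : ℝ) ≤ Nr - 2 * nr := by linarith
  have hd0 : (0 : ℝ) < Nr - 2 * nr := by linarith
  have hNn1 : (0 : ℝ) < Nr - nr - 1 := by linarith
  have hN1 : (0 : ℝ) < Nr - 1 := by linarith
  have ht : 0 < tanhD y := tanhD_pos y
  set t := tanhD y with hteq
  have hc2 : 0 < c2 Nr nr y := by
    rw [c2, ← hteq]
    have h1 : 0 ≤ (nr - 1) / (Nr - 2 * nr) := div_nonneg (by linarith) hd0.le
    have : 0 < nr + 1 + (nr - 1) / (Nr - 2 * nr) := by linarith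
    exact mul_pos this ht
  have hc1 : 0 < c1 Nr nr y := by
    rw [c1, ← hteq]
    have h1 : 0 < (Nr - 2 * nr - 1) * (Nr - nr - 1) / (Nr - 2 * nr) := by
      apply div_pos (by nlinarith) hd0
    have h2 : 0 ≤ (Nr - 1) * (nr - 1) * t / (Nr - 2 * nr) := by
      apply div_nonneg _ hd0.le
      have : 0 ≤ (Nr - 1) * (nr - 1) := by nlinarith
      nlinarith
    linarith
  have hc0 : c0 Nr nr < 0 := by
    rw [c0]
    have : 0 < (Nr - nr - 1) * (Nr - 1) / (Nr - 2 * nr) := div_pos (by nlinarith) hd0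
    linarith
  set C2 := c2 Nr nr y
  set C1 := c1 Nr nr y
  set C0 := c0 Nr nr
  have hDnn : 0 ≤ C1 ^ 2 - 4 * C2 * C0 := by nlinarith
  set s := Real.sqrt (C1 ^ 2 - 4 * C2 * C0) with hsdef
  have hsq : s ^ 2 = C1 ^ 2 - 4 * C2 * C0 := Real.sq_sqrt hDnn
  have hs : C1 ≤ s := by
    rw [hsdef]
    calc C1 = Real.sqrt (C1 ^ 2) := by rw [Real.sqrt_sq hc1.le]
    _ ≤ _ := Real.sqrt_le_sqrt (by nlinarith)
  set u := uRoot Nr nr y with hudef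
  have hueq : u * (s + C1) = -2 * C0 := by
    rw [hudef, uRoot]
    show (-C1 + s) / (2 * C2) * (s + C1) = -2 * C0
    rw [div_mul_eq_mul_div, div_eq_iff (ne_of_gt (by linarith))]
    nlinarith [hsq]
  have hu : 0 < u := by
    have h1 : 0 < s + C1 := by linarith
    have h2 : 0 < -2 * C0 := by linarith
    nlinarith
  have hcu : u * C1 ≤ -C0 := by nlinarith
  constructor
  · have e : cFun Nr nr y - (-((Nr - nr - 1) * (Nr - 2 * nr - 1)) / ((Nr - 2 * nr) * (Nr - 1)))
        = (u * C1 + C0) / (u * (Nr - 1)) := by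
      rw [cFun, ← hudef, ← hteq]
      have hC1 : C1 = (Nr - 2 * nr - 1) * (Nr - nr - 1) / (Nr - 2 * nr)
          + (Nr - 1) * (nr - 1) * t / (Nr - 2 * nr) := rfl
      have hC0 : C0 = -((Nr - nr - 1) * (Nr - 1) / (Nr - 2 * nr)) := rfl
      rw [hC1, hC0]
      field_simp
      ring
    have h2 : (u * C1 + C0) / (u * (Nr - 1)) ≤ 0 := by
      apply div_nonpos_of_nonpos_of_nonneg (by linarith) (by positivity)
    linarith
  · apply div_neg_of_neg_of_pos
    · nlinarith
    · positivity
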